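/- For integers k ≥ 2, N ≥ 1, and β = 1/N ∈ Q/Z, the series E^{(k)}_{β}(τ,s) admits the unfolding: for Re(s) ≫ 0, E^{(k)}_{1/N}(τ,s) = (Γ(s+k)N^{2s+k}/((−2πi)^k π^s)) · ∑_{t ≥ 1, (t,N)=1} t^{−k−2s} ⟨t⟩⁻¹ [ ∑_{γ ∈ Γ_∞\Γ₁(N)} (Im(τ)^s |_k γ) ], where Γ_∞ = {(1 n; 0 1) : n ∈ Z}, ⟨t⟩ denotes the diamond operator, and |_k is the weight-k slash action. -/

import Mathlib

open scoped Real ComplexConjugate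
open Complex

noncomputable def asaiFt (k : ℕ) (s : ℂ) (τ : UpperHalfPlane) (p : ℤ × ℤ) : ℂ :=
  ((τ.im : ℂ)) ^ s * ((p.1 : ℂ) * (τ : ℂ) + (p.2 : ℂ)) ^ (-(k : ℤ)) *
    ((‖(p.1 : ℂ) * (τ : ℂ) + (p.2 : ℂ)‖ : ℝ) : ℂ) ^ (-2 * s)

lemma asai_lin_ne (τ : UpperHalfPlane) {a b : ℤ} (h : ¬(a = 0 ∧ b = 0)) :
    (a : ℂ) * (τ : ℂ) + (b : ℂ) ≠ 0 := by
  intro h0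
  have him : (a : ℝ) * τ.im = 0 := by
    have := congrArg Complex.im h0
    simpa [UpperHalfPlane.coe_im] using this
  have ha : a = 0 := by
    rcases mul_eq_zero.mp him with h | h
    · exact_mod_cast h
    · exact absurd h (ne_of_gt τ.im_pos)
  subst ha
  simp at h0
  exact h ⟨rfl, h0⟩

lemma asaiFt_eq_zero {k : ℕ} (hk : 1 ≤ k) (s : ℂ) (τ : UpperHalfPlane) {p : ℤ × ℤ}
    (h : (p.1 : ℂ) * (τ : ℂ) + (p.2 : ℂ) = 0) : asaiFt k s τ p = 0 := by
  have : (-(k : ℤ)) ≠ 0 := by omega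
  simp [asaiFt, h, zero_zpow _ this]

lemma asaiFt_norm_le {k : ℕ} (hk : 1 ≤ k) (s : ℂ) (τ : UpperHalfPlane) (p : ℤ × ℤ) :
    ‖asaiFt k s τ p‖ ≤
      τ.im ^ s.re * ‖(p.1 : ℂ) * (τ : ℂ) + (p.2 : ℂ)‖ ^ (-((k : ℝ) + 2 * s.re)) := by
  by_cases h : (p.1 : ℂ) * (τ : ℂ) + (p.2 : ℂ) = 0
  · rw [asaiFt_eq_zero hk s τ h, norm_zero]
    positivity
  · have habs : 0 < ‖(p.1 : ℂ) * (τ : ℂ) + (p.2 : ℂ)‖ := by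
      exact norm_pos_iff.mpr h
    rw [asaiFt, norm_mul, norm_mul]
    rw [norm_cpow_eq_rpow_re_of_pos τ.im_pos, norm_zpow,
      norm_cpow_eq_rpow_re_of_pos habs]
    have e1 : ‖(p.1 : ℂ) * (τ : ℂ) + (p.2 : ℂ)‖ ^ (-(k : ℤ))
        = ‖(p.1 : ℂ) * (τ : ℂ) + (p.2 : ℂ)‖ ^ (-(k : ℝ)) := by
      rw [← Real.rpow_intCast]
      norm_num
    rw [e1, mul_assoc, ← Real.rpow_add habs]
    have e2 : (-(k:ℝ)) + (-2 * s).re = -((k : ℝ) + 2 * s.re) := by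
      simp [Complex.neg_re, Complex.mul_re]
      ring
    rw [e2]

lemma asai_H_summable {k : ℕ} (s : ℂ) (τ : UpperHalfPlane) (hs : 2 < (k : ℝ) + 2 * s.re) :
    Summable (fun p : ℤ × ℤ =>
      τ.im ^ s.re * ‖(p.1 : ℂ) * (τ : ℂ) + (p.2 : ℂ)‖ ^ (-((k : ℝ) + 2 * s.re))) := by
  set κ : ℝ := (k : ℝ) + 2 * s.re with hκdef
  have hκ0 : 0 ≤ κ := by linarith
  have h1 : Summable (fun x : Fin 2 → ℤ =>
      (EisensteinSeries.r τ) ^ (-κ) * ‖x‖ ^ (-κ)) :=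
    (EisensteinSeries.summable_one_div_norm_rpow hs).mul_left _
  have h2 : Summable (fun x : Fin 2 → ℤ =>
      ‖(x 0 : ℂ) * (τ : ℂ) + (x 1 : ℂ)‖ ^ (-κ)) := by
    refine h1.of_nonneg_of_le (fun x => by positivity) (fun x => ?_)
    exact EisensteinSeries.summand_bound τ hκ0 x
  have h3 : Summable (fun p : ℤ × ℤ =>
      ‖(p.1 : ℂ) * (τ : ℂ) + (p.2 : ℂ)‖ ^ (-κ)) := by
    refine (Equiv.summable_iff (finTwoArrowEquiv ℤ)).mp ?_
    refine h2.congr fun x => ?_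
    rfl
  exact h3.mul_left _

lemma asaiFt_summable {k : ℕ} (hk : 1 ≤ k) (s : ℂ) (τ : UpperHalfPlane)
    (hs : 2 < (k : ℝ) + 2 * s.re) : Summable (asaiFt k s τ) :=
  Summable.of_norm_bounded (asai_H_summable s τ hs) (asaiFt_norm_le hk s τ)

lemma asai_step1 {k N : ℕ} (hk : 1 ≤ k) (hN : 1 ≤ N) (s : ℂ) (τ : UpperHalfPlane) (p : ℤ × ℤ) :
    ((τ.im : ℂ)) ^ s /
        (((p.1 : ℂ) * (τ : ℂ) + (p.2 : ℂ) + 1 / (N : ℂ)) ^ k *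
          ((‖(p.1 : ℂ) * (τ : ℂ) + (p.2 : ℂ) + 1 / (N : ℂ)‖ : ℝ) : ℂ) ^ (2 * s))
      = (N : ℂ) ^ (2 * s + k) * asaiFt k s τ ((N : ℤ) * p.1, (N : ℤ) * p.2 + 1) := by
  have hN0 : (N : ℂ) ≠ 0 := Nat.cast_ne_zero.mpr (by omega)
  have hNR0 : (0:ℝ) < N := by exact_mod_cast hN
  set D : ℂ := (((N : ℤ) * p.1 : ℤ) : ℂ) * (τ : ℂ) + (((N : ℤ) * p.2 + 1 : ℤ) : ℂ) with hDdef
  have hD : (p.1 : ℂ) * (τ : ℂ) + (p.2 : ℂ) + 1 / (N : ℂ) = D / N := by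
    rw [hDdef]; push_cast; field_simp; ring
  have hcomp : ((((N:ℤ) * p.1, (N:ℤ) * p.2 + 1) : ℤ × ℤ).1 : ℂ) * (τ : ℂ)
      + ((((N:ℤ) * p.1, (N:ℤ) * p.2 + 1) : ℤ × ℤ).2 : ℂ) = D := by rw [hDdef]
  by_cases hD0 : D = 0
  · rw [hD, hD0, zero_div]
    rw [asaiFt_eq_zero hk s τ (by rw [hcomp]; exact hD0), mul_zero]
    rw [zero_pow (by omega), zero_mul, div_zero]
  · rw [hD]
    have habs : ‖D / N‖ = ‖D‖ / N := by
      rw [norm_div]; simp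
    have hcpow : ((‖D‖ / (N:ℝ) : ℝ) : ℂ) ^ (2 * s)
        = ((‖D‖ : ℝ) : ℂ) ^ (2 * s) * ((N : ℂ) ^ (2 * s))⁻¹ := by
      rw [div_eq_mul_inv, Complex.ofReal_mul,
        mul_cpow_ofReal_nonneg (by positivity) (by positivity)]
      congr 1
      rw [show (((N:ℝ)⁻¹ : ℝ) : ℂ) = ((N:ℂ))⁻¹ by push_cast; ring]
      rw [inv_cpow _ _ (by rw [Complex.natCast_arg]; exact Real.pi_ne_zero.symm)]
    rw [habs] at *
    rw [hcpow]
    rw [asaiFt, hcomp]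
    rw [div_pow]
    have hNk : (N : ℂ) ^ (2 * s + (k:ℂ)) = (N : ℂ) ^ (2 * s) * (N : ℂ) ^ (k : ℕ) := by
      rw [cpow_add _ _ hN0, cpow_natCast]
    rw [hNk, zpow_neg, zpow_natCast, neg_mul, cpow_neg]
    have h1 : D ^ k ≠ 0 := pow_ne_zero _ hD0
    have h2 : ((‖D‖ : ℝ) : ℂ) ^ (2 * s) ≠ 0 := by
      intro h0
      rcases (cpow_eq_zero_iff _ _).mp h0 with ⟨h1', _⟩
      exact hD0 (by simpa using h1')
    have h3 : (N : ℂ) ^ (2 * s) ≠ 0 := by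
      intro h0
      exact hN0 ((cpow_eq_zero_iff _ _).mp h0).1
    have h4 : (N : ℂ) ^ (k:ℕ) ≠ 0 := pow_ne_zero _ hN0
    field_simp

lemma asai_step3 {k t : ℕ} (ht : 1 ≤ t) (s : ℂ) (τ : UpperHalfPlane) (q : ℤ × ℤ) :
    ((t : ℂ)) ^ (-(k : ℂ) - 2 * s) *
      (((τ.im : ℂ)) ^ s * ((q.1 : ℂ) * (τ : ℂ) + (q.2 : ℂ)) ^ (-(k : ℤ)) *
        ((‖(q.1 : ℂ) * (τ : ℂ) + (q.2 : ℂ)‖ : ℝ) : ℂ) ^ (-2 * s))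
    = asaiFt k s τ ((t : ℤ) * q.1, (t : ℤ) * q.2) := by
  have ht0 : (t : ℂ) ≠ 0 := Nat.cast_ne_zero.mpr (by omega)
  have hsplit : (t : ℂ) ^ (-(k : ℂ) - 2 * s)
      = (t : ℂ) ^ (-(k : ℤ)) * (t : ℂ) ^ (-2 * s) := by
    rw [sub_eq_add_neg, cpow_add _ _ ht0]
    congr 1
    · rw [show (-(k : ℂ)) = ((-(k : ℤ) : ℤ) : ℂ) by push_cast; ring, cpow_intCast]
    · rw [neg_mul]
  have hlin : (((t : ℤ) * q.1 : ℤ) : ℂ) * (τ : ℂ) + (((t : ℤ) * q.2 : ℤ) : ℂ)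
      = (t : ℂ) * ((q.1 : ℂ) * (τ : ℂ) + (q.2 : ℂ)) := by push_cast; ring
  rw [asaiFt]
  show _ = ((τ.im : ℂ)) ^ s
      * ((((t : ℤ) * q.1 : ℤ) : ℂ) * (τ : ℂ) + (((t : ℤ) * q.2 : ℤ) : ℂ)) ^ (-(k : ℤ)) *
    ((‖(((t : ℤ) * q.1 : ℤ) : ℂ) * (τ : ℂ) + (((t : ℤ) * q.2 : ℤ) : ℂ)‖ : ℝ) : ℂ) ^ (-2 * s)
  rw [hlin, mul_zpow, norm_mul, Complex.norm_natCast]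
  rw [Complex.ofReal_mul, mul_cpow_ofReal_nonneg (by positivity) (by positivity)]
  rw [hsplit]
  push_cast
  ring

def asaiCond (N : ℕ) (x : ℕ × ℤ × ℤ) : Prop :=
  (1 ≤ x.1 ∧ Nat.Coprime x.1 N) ∧
    (Int.gcd x.2.1 x.2.2 = 1 ∧ (N : ℤ) ∣ x.2.1 ∧ (((x.2.2 * x.1 : ℤ) : ZMod N) = 1))

instance (N : ℕ) (x : ℕ × ℤ × ℤ) : Decidable (asaiCond N x) := by
  unfold asaiCond; infer_instance

noncomputable def asaiG (k N : ℕ) (s : ℂ) (τ : UpperHalfPlane) (x : ℕ × ℤ × ℤ) : ℂ :=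
  if asaiCond N x then asaiFt k s τ ((x.1 : ℤ) * x.2.1, (x.1 : ℤ) * x.2.2) else 0

lemma asai_psi_inj {N : ℕ} {x x' : ℕ × ℤ × ℤ} (h : asaiCond N x) (h' : asaiCond N x')
    (h1 : (x.1 : ℤ) * x.2.1 = (x'.1 : ℤ) * x'.2.1)
    (h2 : (x.1 : ℤ) * x.2.2 = (x'.1 : ℤ) * x'.2.2) : x = x' := by
  obtain ⟨⟨ht, _⟩, hg, _, _⟩ := h
  obtain ⟨⟨ht', _⟩, hg', _, _⟩ := h'
  have e1 : Int.gcd ((x.1 : ℤ) * x.2.1) ((x.1 : ℤ) * x.2.2) = x.1 := by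
    rw [Int.gcd_mul_left, hg, mul_one, Int.natAbs_natCast]
  have e2 : Int.gcd ((x'.1 : ℤ) * x'.2.1) ((x'.1 : ℤ) * x'.2.2) = x'.1 := by
    rw [Int.gcd_mul_left, hg', mul_one, Int.natAbs_natCast]
  have htt : x.1 = x'.1 := by rw [← e1, ← e2, h1, h2]
  have ht0 : (x.1 : ℤ) ≠ 0 := by exact_mod_cast (by omega : x.1 ≠ 0)
  rw [← htt] at h1 h2
  exact Prod.ext htt (Prod.ext (mul_left_cancel₀ ht0 h1) (mul_left_cancel₀ ht0 h2))

lemma asaiG_summable {k N : ℕ} {s : ℂ} {τ : UpperHalfPlane}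
    (hft : Summable (asaiFt k s τ)) : Summable (asaiG k N s τ) := by
  have hinj : Function.Injective
      (fun x : {x : ℕ × ℤ × ℤ // x ∈ {x | asaiCond N x}} =>
        ((((x : ℕ × ℤ × ℤ)).1 : ℤ) * ((x : ℕ × ℤ × ℤ)).2.1,
          (((x : ℕ × ℤ × ℤ)).1 : ℤ) * ((x : ℕ × ℤ × ℤ)).2.2)) := by
    rintro ⟨x, hx⟩ ⟨x', hx'⟩ h
    simp only [Prod.mk.injEq] at h
    exact Subtype.ext (asai_psi_inj hx hx' h.1 h.2)
  have hs1 : Summable ((fun x : ℕ × ℤ × ℤ => asaiFt k s τ ((x.1 : ℤ) * x.2.1, (x.1 : ℤ) * x.2.2))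
      ∘ ((↑) : {x : ℕ × ℤ × ℤ // x ∈ {x | asaiCond N x}} → ℕ × ℤ × ℤ)) :=
    hft.comp_injective hinj
  have hs2 := summable_subtype_iff_indicator.mp hs1
  refine hs2.congr fun x => ?_
  rw [Set.indicator_apply, asaiG]
  simp only [Set.mem_setOf_eq]

lemma asai_dvd2 {N : ℕ} {x : ℕ × ℤ × ℤ} (h : asaiCond N x) :
    (N : ℤ) ∣ (x.1 : ℤ) * x.2.2 - 1 := by
  rw [← ZMod.intCast_zmod_eq_zero_iff_dvd]
  have h5 := h.2.2.2
  push_cast at h5 ⊢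
  rw [mul_comm]
  linear_combination h5

lemma asai_e1 {N : ℕ} {x : ℕ × ℤ × ℤ} (h : asaiCond N x) :
    (N : ℤ) * (((x.1 : ℤ) * x.2.1) / N) = (x.1 : ℤ) * x.2.1 :=
  Int.mul_ediv_cancel' (h.2.2.1.mul_left _)

lemma asai_e2 {N : ℕ} {x : ℕ × ℤ × ℤ} (h : asaiCond N x) :
    (N : ℤ) * (((x.1 : ℤ) * x.2.2 - 1) / N) + 1 = (x.1 : ℤ) * x.2.2 := by
  have := Int.mul_ediv_cancel' (asai_dvd2 h)
  omega

lemma asai_reindex (k N : ℕ) (hk : 1 ≤ k) (hN : 1 ≤ N) (s : ℂ) (τ : UpperHalfPlane) :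
    ∑' p : ℤ × ℤ, asaiFt k s τ ((N : ℤ) * p.1, (N : ℤ) * p.2 + 1)
      = ∑' x : ℕ × ℤ × ℤ, asaiG k N s τ x := by
  have hcond : ∀ x : Function.support (asaiG k N s τ), asaiCond N (x : ℕ × ℤ × ℤ) := by
    rintro ⟨x, hx⟩
    by_contra hcon
    exact hx (by rw [asaiG, if_neg hcon])
  apply tsum_eq_tsum_of_ne_zero_bij
    (i := fun x => ((((x : ℕ × ℤ × ℤ).1 : ℤ) * (x : ℕ × ℤ × ℤ).2.1) / N,
      (((x : ℕ × ℤ × ℤ).1 : ℤ) * (x : ℕ × ℤ × ℤ).2.2 - 1) / N))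
  · rintro ⟨x, hx⟩ ⟨x', hx'⟩ hxx
    have hc := hcond ⟨x, hx⟩
    have hc' := hcond ⟨x', hx'⟩
    simp only [Prod.mk.injEq] at hxx
    apply Subtype.ext
    apply asai_psi_inj hc hc'
    · rw [← asai_e1 hc, ← asai_e1 hc', hxx.1]
    · rw [← asai_e2 hc, ← asai_e2 hc', hxx.2]
  · rintro p hp
    set a : ℤ := (N : ℤ) * p.1 with hadef
    set b : ℤ := (N : ℤ) * p.2 + 1 with hbdef
    have hab : ¬(a = 0 ∧ b = 0) := by
      rintro ⟨ha, hb⟩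
      exact hp (asaiFt_eq_zero hk s τ (p := (a, b)) (by
        exact (by simp [ha, hb] : ((a : ℂ)) * (τ : ℂ) + ((b : ℂ)) = 0)))
    set g : ℕ := Int.gcd a b with hgdef
    have hg0 : 0 < g := Int.gcd_pos_iff.mpr (by tauto)
    have hga : (g : ℤ) ∣ a := Int.gcd_dvd_left a b
    have hgb : (g : ℤ) ∣ b := Int.gcd_dvd_right a b
    set c : ℤ := a / (g : ℤ) with hcdef
    set d : ℤ := b / (g : ℤ) with hddef
    have hc : (g : ℤ) * c = a := Int.mul_ediv_cancel' hga
    have hd : (g : ℤ) * d = b := Int.mul_ediv_cancel' hgb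
    have hgcd : Int.gcd c d = 1 := Int.gcd_div_gcd_div_gcd hg0
    have hcop : Nat.Coprime g N := by
      have h1 : ((Nat.gcd g N : ℕ) : ℤ) ∣ b :=
        dvd_trans (Int.natCast_dvd_natCast.mpr (Nat.gcd_dvd_left g N)) hgb
      have h2 : ((Nat.gcd g N : ℕ) : ℤ) ∣ (N : ℤ) * p.2 :=
        Dvd.dvd.mul_right (Int.natCast_dvd_natCast.mpr (Nat.gcd_dvd_right g N)) _
      have h3 : ((Nat.gcd g N : ℕ) : ℤ) ∣ 1 := by
        have hb1 : (1 : ℤ) = b - (N : ℤ) * p.2 := by rw [hbdef]; ring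
        rw [hb1]
        exact dvd_sub h1 h2
      have h4 : Nat.gcd g N ∣ 1 := by exact_mod_cast h3
      exact Nat.dvd_one.mp h4
    have hNc : (N : ℤ) ∣ c := by
      have hco : IsCoprime ((N : ℕ) : ℤ) ((g : ℕ) : ℤ) := by
        rw [Int.isCoprime_iff_gcd_eq_one, Int.gcd_natCast_natCast]
        exact Nat.coprime_comm.mp hcop
      have hdvd : (N : ℤ) ∣ (g : ℤ) * c := by
        rw [hc, hadef]
        exact Dvd.intro _ rfl
      exact hco.dvd_of_dvd_mul_left hdvd
    have hmod : ((d * (g : ℤ) : ℤ) : ZMod N) = 1 := by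
      have hdg : d * (g : ℤ) = (N : ℤ) * p.2 + 1 := by rw [mul_comm, hd, hbdef]
      rw [hdg]
      push_cast
      rw [ZMod.natCast_self]
      ring
    have hcx : asaiCond N (g, c, d) := ⟨⟨hg0, hcop⟩, hgcd, hNc, by exact_mod_cast hmod⟩
    have hGx : asaiG k N s τ (g, c, d) ≠ 0 := by
      rw [asaiG, if_pos hcx]
      have hpair : (((g:ℕ) : ℤ) * c, ((g:ℕ) : ℤ) * d) = (a, b) := by rw [hc, hd]
      rw [hpair]
      exact hp
    refine ⟨⟨(g, c, d), hGx⟩, ?_⟩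
    have hN0 : (N : ℤ) ≠ 0 := by exact_mod_cast (by omega : N ≠ 0)
    simp only
    rw [hc, hd]
    have hb2 : b - 1 = (N : ℤ) * p.2 := by rw [hbdef]; ring
    rw [hadef, hb2]
    rw [Int.mul_ediv_cancel_left _ hN0, Int.mul_ediv_cancel_left _ hN0]
  · rintro ⟨x, hx⟩
    have hc := hcond ⟨x, hx⟩
    simp only
    rw [asaiG, if_pos hc]
    congr 1
    exact Prod.ext (asai_e1 hc) (asai_e2 hc)

theorem asai_stmt_16 (k N : ℕ) (hk : 2 ≤ k) (hN : 1 ≤ N) (s : ℂ)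
    (hs : 2 < (k : ℝ) + 2 * s.re) (τ : UpperHalfPlane) :
    Complex.Gamma (s + k) / ((-2 * π * I) ^ k * (π : ℂ) ^ s) *
      ∑' q : ℤ × ℤ, ((τ.im : ℂ)) ^ s /
        (((q.1 : ℂ) * (τ : ℂ) + (q.2 : ℂ) + 1 / (N : ℂ)) ^ k *
          ((‖(q.1 : ℂ) * (τ : ℂ) + (q.2 : ℂ) + 1 / (N : ℂ)‖ : ℝ) : ℂ) ^ (2 * s))
    = Complex.Gamma (s + k) * (N : ℂ) ^ (2 * s + k) / ((-2 * π * I) ^ k * (π : ℂ) ^ s) *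
      ∑' t : ℕ,
        (if 1 ≤ t ∧ Nat.Coprime t N then
          ((t : ℂ)) ^ (-(k : ℂ) - 2 * s) *
            ∑' q : ℤ × ℤ,
              (if Int.gcd q.1 q.2 = 1 ∧ (N : ℤ) ∣ q.1 ∧ (((q.2 * t : ℤ) : ZMod N) = 1) then
                ((τ.im : ℂ)) ^ s * ((q.1 : ℂ) * (τ : ℂ) + (q.2 : ℂ)) ^ (-(k : ℤ)) *
                  ((‖(q.1 : ℂ) * (τ : ℂ) + (q.2 : ℂ)‖ : ℝ) : ℂ) ^ (-2 * s)
              else 0)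
        else 0) := by
  have hk1 : 1 ≤ k := by omega
  have hft : Summable (asaiFt k s τ) := asaiFt_summable hk1 s τ hs
  have hG : Summable (asaiG k N s τ) := asaiG_summable hft
  have hL : (∑' q : ℤ × ℤ, ((τ.im : ℂ)) ^ s /
        (((q.1 : ℂ) * (τ : ℂ) + (q.2 : ℂ) + 1 / (N : ℂ)) ^ k *
          ((‖(q.1 : ℂ) * (τ : ℂ) + (q.2 : ℂ) + 1 / (N : ℂ)‖ : ℝ) : ℂ) ^ (2 * s)))
      = (N : ℂ) ^ (2 * s + k) *
        ∑' p : ℤ × ℤ, asaiFt k s τ ((N : ℤ) * p.1, (N : ℤ) * p.2 + 1) := by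
    rw [← tsum_mul_left]
    exact tsum_congr fun p => asai_step1 hk1 hN s τ p
  have hR : ∀ t : ℕ,
      (if 1 ≤ t ∧ Nat.Coprime t N then
          ((t : ℂ)) ^ (-(k : ℂ) - 2 * s) *
            ∑' q : ℤ × ℤ,
              (if Int.gcd q.1 q.2 = 1 ∧ (N : ℤ) ∣ q.1 ∧ (((q.2 * t : ℤ) : ZMod N) = 1) then
                ((τ.im : ℂ)) ^ s * ((q.1 : ℂ) * (τ : ℂ) + (q.2 : ℂ)) ^ (-(k : ℤ)) *
                  ((‖(q.1 : ℂ) * (τ : ℂ) + (q.2 : ℂ)‖ : ℝ) : ℂ) ^ (-2 * s)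
              else 0)
        else 0) = ∑' q : ℤ × ℤ, asaiG k N s τ (t, q) := by
    intro t
    by_cases hP : 1 ≤ t ∧ Nat.Coprime t N
    · rw [if_pos hP, ← tsum_mul_left]
      refine tsum_congr fun q => ?_
      by_cases hQ : Int.gcd q.1 q.2 = 1 ∧ (N : ℤ) ∣ q.1 ∧ (((q.2 * t : ℤ) : ZMod N) = 1)
      · rw [if_pos hQ, asaiG, if_pos (show asaiCond N (t, q) from ⟨hP, hQ⟩)]
        exact asai_step3 hP.1 s τ q
      · rw [if_neg hQ, mul_zero, asaiG, if_neg (fun hcon => hQ hcon.2)]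
    · rw [if_neg hP]
      have hz : ∀ q : ℤ × ℤ, asaiG k N s τ (t, q) = 0 := fun q => by
        rw [asaiG, if_neg (fun hcon => hP hcon.1)]
      rw [tsum_congr hz, tsum_zero]
  rw [hL, tsum_congr hR, ← Summable.tsum_prod' hG (fun t => hG.prod_factor t),
    ← asai_reindex k N hk1 hN s τ]
  ring
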